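/- The braided R-matrices R_i(z) = 1 + ((z-1)/(t^{1/2} z - t^{-1/2})) e_i on (C^3)^{⊗3} (with e_1 acting on factors 1,2 and e_2 on factors 2,3) satisfy the braided Yang-Baxter equation R_1(y z^{-1}) R_2(x z^{-1}) R_1(x y^{-1}) = R_2(x y^{-1}) R_1(x z^{-1}) R_2(y z^{-1}) for all nonzero spectral parameters x, y, z for which the denominators are nonzero. -/

import Mathlib

open Matrix Kronecker

noncomputable section

/-- The matrix of `E^{(i,j)} ∈ End(ℂ³)`, defined by `E^{(i,j)} v_k = δ_{i,k} v_j`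
(indices `-1,0,1` are encoded as `0,1,2 : Fin 3`). -/
def Em (i j : Fin 3) : Matrix (Fin 3) (Fin 3) ℂ := Matrix.single j i 1

/-- `t^{(1/2)·sign(j-i)}` written in terms of `s = t^{1/2}`. -/
def sgnPow (s : ℂ) (i j : Fin 3) : ℂ := if i < j then s else if j < i then s⁻¹ else 1

/-- The stochastic Hecke generator
`e = Σ_{i,j} (E^{(i,j)} ⊗ E^{(j,i)} - E^{(j,j)} ⊗ E^{(i,i)}) t^{(1/2) sign(j-i)}`
on `ℂ³ ⊗ ℂ³`, with `s = t^{1/2}`. -/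
def eMat (s : ℂ) : Matrix (Fin 3 × Fin 3) (Fin 3 × Fin 3) ℂ :=
  ∑ i : Fin 3, ∑ j : Fin 3,
    sgnPow s i j • (Em i j ⊗ₖ Em j i - Em j j ⊗ₖ Em i i)

/-- `e₁ = e ⊗ 1` acting on factors 1,2 of `ℂ³ ⊗ ℂ³ ⊗ ℂ³`. -/
def e1 (s : ℂ) : Matrix (Fin 3 × Fin 3 × Fin 3) (Fin 3 × Fin 3 × Fin 3) ℂ :=
  Matrix.of fun p q =>
    eMat s (p.1, p.2.1) (q.1, q.2.1) * (if p.2.2 = q.2.2 then 1 else 0)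

/-- `e₂ = 1 ⊗ e` acting on factors 2,3 of `ℂ³ ⊗ ℂ³ ⊗ ℂ³`. -/
def e2 (s : ℂ) : Matrix (Fin 3 × Fin 3 × Fin 3) (Fin 3 × Fin 3 × Fin 3) ℂ :=
  Matrix.of fun p q =>
    (if p.1 = q.1 then 1 else 0) * eMat s p.2 q.2

/-- `R₁(z) = 1 + ((z-1)/(t^{1/2}z - t^{-1/2})) e₁`. -/
def R1 (s z : ℂ) : Matrix (Fin 3 × Fin 3 × Fin 3) (Fin 3 × Fin 3 × Fin 3) ℂ :=
  1 + ((z - 1) / (s * z - s⁻¹)) • e1 s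

/-- `R₂(z) = 1 + ((z-1)/(t^{1/2}z - t^{-1/2})) e₂`. -/
def R2 (s z : ℂ) : Matrix (Fin 3 × Fin 3 × Fin 3) (Fin 3 × Fin 3 × Fin 3) ℂ :=
  1 + ((z - 1) / (s * z - s⁻¹)) • e2 s

/-- Explicit entries of `eMat`. -/
lemma eMat_apply (s : ℂ) (p q : Fin 3 × Fin 3) :
    eMat s p q = if p.1 = p.2 then 0 else if q = (p.2, p.1) then sgnPow s p.2 p.1
      else if q = p then -(sgnPow s p.2 p.1) else 0 := by
  obtain ⟨a, b⟩ := p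
  obtain ⟨c, d⟩ := q
  simp only [eMat, Fin.sum_univ_three, Matrix.add_apply, Matrix.sum_apply,
    Matrix.smul_apply, Matrix.sub_apply, kroneckerMap_apply, Em,
    Matrix.single, Matrix.of_apply, smul_eq_mul]
  fin_cases a <;> fin_cases b <;> fin_cases c <;> fin_cases d <;>
    simp (config := {decide := true}) [sgnPow]

lemma e1_apply (s : ℂ) (p q : Fin 3 × Fin 3 × Fin 3) :
    e1 s p q = eMat s (p.1, p.2.1) (q.1, q.2.1) * (if p.2.2 = q.2.2 then 1 else 0) := rfl

lemma e2_apply (s : ℂ) (p q : Fin 3 × Fin 3 × Fin 3) :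
    e2 s p q = (if p.1 = q.1 then 1 else 0) * eMat s p.2 q.2 := rfl

/-- The Hecke quadratic relation for `eMat`. -/
lemma heMat (s : ℂ) (hs0 : s ≠ 0) :
    eMat s * eMat s = (-(s + s⁻¹)) • eMat s := by
  ext ⟨a, b⟩ ⟨c, d⟩
  simp only [Matrix.mul_apply, Matrix.smul_apply, Fintype.sum_prod_type,
    Fin.sum_univ_three, eMat_apply, smul_eq_mul]
  fin_cases a <;> fin_cases b <;> fin_cases c <;> fin_cases d <;>
    simp (config := {decide := true}) [sgnPow] <;> field_simp <;> ring

lemma mul12_apply (s : ℂ) (p q : Fin 3 × Fin 3 × Fin 3) :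
    (e1 s * e2 s) p q
      = ∑ u : Fin 3, eMat s (p.1, p.2.1) (q.1, u) * eMat s (u, p.2.2) q.2 := by
  simp [Matrix.mul_apply, e1, e2, Fintype.sum_prod_type, mul_ite, ite_mul,
    mul_zero, zero_mul, mul_one, one_mul, Finset.sum_ite_eq, Finset.sum_ite_eq']

lemma mul21_apply (s : ℂ) (p q : Fin 3 × Fin 3 × Fin 3) :
    (e2 s * e1 s) p q
      = ∑ u : Fin 3, eMat s p.2 (u, q.2.2) * eMat s (p.1, u) (q.1, q.2.1) := by
  simp [Matrix.mul_apply, e1, e2, Fintype.sum_prod_type, mul_ite, ite_mul,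
    mul_zero, zero_mul, mul_one, one_mul, Finset.sum_ite_eq, Finset.sum_ite_eq']

lemma mul121_apply (s : ℂ) (p q : Fin 3 × Fin 3 × Fin 3) :
    (e1 s * e2 s * e1 s) p q
      = ∑ w : Fin 3, ∑ v : Fin 3, ∑ u : Fin 3,
          eMat s (p.1, p.2.1) (w, v) *
            (eMat s (v, p.2.2) (u, q.2.2) * eMat s (w, u) (q.1, q.2.1)) := by
  rw [Matrix.mul_assoc]
  simp [Matrix.mul_apply, e1, e2, mul21_apply, Fintype.sum_prod_type, Finset.mul_sum,
    mul_ite, ite_mul, mul_zero, zero_mul, mul_one, one_mul,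
    Finset.sum_ite_eq, Finset.sum_ite_eq', mul_assoc]

lemma mul212_apply (s : ℂ) (p q : Fin 3 × Fin 3 × Fin 3) :
    (e2 s * e1 s * e2 s) p q
      = ∑ w : Fin 3, ∑ v : Fin 3, ∑ u : Fin 3,
          eMat s p.2 (w, v) *
            (eMat s (p.1, w) (q.1, u) * eMat s (u, v) q.2) := by
  rw [Matrix.mul_assoc]
  simp [Matrix.mul_apply, e1, e2, mul12_apply, Fintype.sum_prod_type, Finset.mul_sum,
    mul_ite, ite_mul, mul_zero, zero_mul, mul_one, one_mul,
    Finset.sum_ite_eq, Finset.sum_ite_eq', mul_assoc]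

/-- The Hecke quadratic relation for `e₁`. -/
lemma e1sq (s : ℂ) (hs0 : s ≠ 0) : e1 s * e1 s = (-(s + s⁻¹)) • e1 s := by
  ext p q
  have h : (e1 s * e1 s) p q
      = (eMat s * eMat s) (p.1, p.2.1) (q.1, q.2.1) * (if p.2.2 = q.2.2 then 1 else 0) := by
    simp [Matrix.mul_apply, e1, Fintype.sum_prod_type, mul_ite, ite_mul, mul_zero,
      zero_mul, mul_one, one_mul, Finset.sum_ite_eq, Finset.sum_ite_eq', Finset.sum_mul]
  rw [h, heMat s hs0]
  simp [e1, smul_eq_mul]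

/-- The Hecke quadratic relation for `e₂`. -/
lemma e2sq (s : ℂ) (hs0 : s ≠ 0) : e2 s * e2 s = (-(s + s⁻¹)) • e2 s := by
  ext p q
  have h : (e2 s * e2 s) p q
      = (if p.1 = q.1 then 1 else 0) * (eMat s * eMat s) p.2 q.2 := by
    simp [Matrix.mul_apply, e2, Fintype.sum_prod_type, mul_ite, ite_mul, mul_zero,
      zero_mul, mul_one, one_mul, Finset.sum_ite_eq, Finset.sum_ite_eq', Finset.mul_sum]
  rw [h, heMat s hs0]
  simp [e2, smul_eq_mul]

set_option maxHeartbeats 12000000 in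
/-- The braid relation for the Hecke generators `e₁`, `e₂`. -/
lemma braid (s : ℂ) (hs0 : s ≠ 0) :
    e1 s * e2 s * e1 s - e1 s = e2 s * e1 s * e2 s - e2 s := by
  have hss : s * s⁻¹ = 1 := mul_inv_cancel₀ hs0
  have hss' : s⁻¹ * s = 1 := inv_mul_cancel₀ hs0
  ext ⟨a, b, c⟩ ⟨d, e, f⟩
  fin_cases a <;> fin_cases b <;> fin_cases c <;> fin_cases d <;> fin_cases e <;> fin_cases f <;>
  · simp (config := {decide := true}) only [Matrix.sub_apply, mul121_apply, mul212_apply,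
      e1_apply, e2_apply, Fin.sum_univ_three, eMat_apply, sgnPow,
      if_true, if_false, reduceIte, mul_zero, zero_mul, mul_one, one_mul,
      add_zero, zero_add, sub_zero, zero_sub, neg_mul, mul_neg, neg_neg, hss, hss']
    try ring_nf
    try simp [hss, hss', mul_comm]
    try field_simp
    try ring

/-- The key scalar identity. -/
lemma hKey (a b c s x y z : ℂ) (hs0 : s ≠ 0)
    (h1' : s^2*y - z ≠ 0) (h2' : s^2*x - z ≠ 0) (h3' : s^2*x - y ≠ 0)
    (ha : a*(s^2*y - z) = s*(y-z)) (hb : b*(s^2*x - z) = s*(x-z))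
    (hc : c*(s^2*x - y) = s*(x-y)) :
    a + c - (s+s⁻¹)*a*c + a*b*c = b := by
  have hss : s * s⁻¹ = 1 := mul_inv_cancel₀ hs0
  have key : (a + c - (s+s⁻¹)*a*c + a*b*c - b) * (s*((s^2*y-z)*((s^2*x-z)*(s^2*x-y)))) = 0 := by
    linear_combination (s*(s^2*x-z)*(s^2*x-y)*(1 - (s+s⁻¹)*c + b*c)) * ha
      + (s^2*(y-z)*c*(s^2*x-y) - s*(s^2*y-z)*(s^2*x-y)) * hb
      + (s*(s^2*y-z)*(s^2*x-z) - (s+s⁻¹)*s^2*(y-z)*(s^2*x-z) + s^3*(x-z)*(y-z)) * hc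
      + (-(s^2*(y-z)*(x-y)*(s^2*x-z))) * hss
  have hne : s*((s^2*y-z)*((s^2*x-z)*(s^2*x-y))) ≠ 0 :=
    mul_ne_zero hs0 (mul_ne_zero h1' (mul_ne_zero h2' h3'))
  have h0 := (mul_eq_zero.mp key).resolve_right hne
  linear_combination h0

/-- The braided Yang–Baxter equation with abstract scalar coefficients. -/
lemma RYBE (s a b c : ℂ) (hs0 : s ≠ 0)
    (hK : a + c - (s+s⁻¹)*a*c + a*b*c = b) :
    (1 + a • e1 s) * (1 + b • e2 s) * (1 + c • e1 s)
      = (1 + c • e2 s) * (1 + b • e1 s) * (1 + a • e2 s) := by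
  have hB : e1 s * e2 s * e1 s = e2 s * e1 s * e2 s - e2 s + e1 s := by
    rw [← braid s hs0]; abel
  simp only [add_mul, mul_add, one_mul, mul_one, smul_mul_assoc, mul_smul_comm, smul_smul]
  rw [e1sq s hs0, e2sq s hs0, hB]
  simp only [smul_add, smul_sub, smul_smul]
  match_scalars
  any_goals ring1
  any_goals linear_combination hK
  any_goals linear_combination -hK

/-- the braided Yang-Baxter equation
`R₁(yz⁻¹) R₂(xz⁻¹) R₁(xy⁻¹) = R₂(xy⁻¹) R₁(xz⁻¹) R₂(yz⁻¹)`. -/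
theorem statement16 (s t x y z : ℂ) (hs : s ^ 2 = t) (hs0 : s ≠ 0) (ht : t ≠ 1)
    (hx : x ≠ 0) (hy : y ≠ 0) (hz : z ≠ 0)
    (h1 : s * (y * z⁻¹) - s⁻¹ ≠ 0) (h2 : s * (x * z⁻¹) - s⁻¹ ≠ 0)
    (h3 : s * (x * y⁻¹) - s⁻¹ ≠ 0) :
    R1 s (y * z⁻¹) * R2 s (x * z⁻¹) * R1 s (x * y⁻¹)
      = R2 s (x * y⁻¹) * R1 s (x * z⁻¹) * R2 s (y * z⁻¹) := by
  have hss' : s⁻¹ * s = 1 := inv_mul_cancel₀ hs0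
  have hzz : z * z⁻¹ = 1 := mul_inv_cancel₀ hz
  have hyy : y * y⁻¹ = 1 := mul_inv_cancel₀ hy
  have hD1 : (s*(y*z⁻¹) - s⁻¹)*(s*z) = s^2*y - z := by
    linear_combination s^2*y*hzz - z*hss'
  have hD2 : (s*(x*z⁻¹) - s⁻¹)*(s*z) = s^2*x - z := by
    linear_combination s^2*x*hzz - z*hss'
  have hD3 : (s*(x*y⁻¹) - s⁻¹)*(s*y) = s^2*x - y := by
    linear_combination s^2*x*hyy - y*hss'
  have h1' : s^2*y - z ≠ 0 := hD1 ▸ mul_ne_zero h1 (mul_ne_zero hs0 hz)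
  have h2' : s^2*x - z ≠ 0 := hD2 ▸ mul_ne_zero h2 (mul_ne_zero hs0 hz)
  have h3' : s^2*x - y ≠ 0 := hD3 ▸ mul_ne_zero h3 (mul_ne_zero hs0 hy)
  have ha : ((y*z⁻¹ - 1)/(s*(y*z⁻¹) - s⁻¹))*(s^2*y - z) = s*(y - z) := by
    rw [← hD1, ← mul_assoc, div_mul_cancel₀ _ h1]
    linear_combination s*y*hzz
  have hb : ((x*z⁻¹ - 1)/(s*(x*z⁻¹) - s⁻¹))*(s^2*x - z) = s*(x - z) := by
    rw [← hD2, ← mul_assoc, div_mul_cancel₀ _ h2]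
    linear_combination s*x*hzz
  have hc : ((x*y⁻¹ - 1)/(s*(x*y⁻¹) - s⁻¹))*(s^2*x - y) = s*(x - y) := by
    rw [← hD3, ← mul_assoc, div_mul_cancel₀ _ h3]
    linear_combination s*x*hyy
  rw [R1, R1, R1, R2, R2, R2]
  exact RYBE s _ _ _ hs0 (hKey _ _ _ s x y z hs0 h1' h2' h3' ha hb hc)
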